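/- Let X₀ = diag(1,1,−2), Y = Y_{α,δ,ε} = !![α,0,δ; 0,−α,ε; δ,ε,0] with (α,δ,ε) ≠ (0,0,0), and W = span{X₀, Y}. Then there exists c ∈ ℝ such that for Z = Y + cX₀, the space [𝔰𝔬(3), Z] + W equals all of 𝔭, i.e. W is generic. -/

import Mathlib

open Matrix

set_option maxHeartbeats 1000000 in
lemma key (α δ ε c : ℝ)
    (hD : 2*ε^4 + 4*δ^2*ε^2 + 2*δ^4 - 18*α*ε^2*c + 18*α*δ^2*c + 36*α^2*c^2
        - 2*α^2*ε^2 - 2*α^2*δ^2 - 4*α^4 ≠ 0) :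
      {P : Matrix (Fin 3) (Fin 3) ℝ |
        ∃ (U : Matrix (Fin 3) (Fin 3) ℝ) (a b : ℝ), Uᵀ = -U ∧
          P = (U * (!![α, 0, δ; 0, -α, ε; δ, ε, 0]
                  + c • !![(1 : ℝ), 0, 0; 0, 1, 0; 0, 0, -2])
              - (!![α, 0, δ; 0, -α, ε; δ, ε, 0]
                  + c • !![(1 : ℝ), 0, 0; 0, 1, 0; 0, 0, -2]) * U)
            + a • !![(1 : ℝ), 0, 0; 0, 1, 0; 0, 0, -2]
            + b • !![α, 0, δ; 0, -α, ε; δ, ε, 0]}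
      = {P : Matrix (Fin 3) (Fin 3) ℝ | Pᵀ = P ∧ P.trace = 0} := by
  ext P
  simp only [Set.mem_setOf_eq]
  constructor
  · rintro ⟨U, a, b, hU, rfl⟩
    set X : Matrix (Fin 3) (Fin 3) ℝ := !![(1:ℝ),0,0;0,1,0;0,0,-2] with hX
    set Y : Matrix (Fin 3) (Fin 3) ℝ := !![α,0,δ;0,-α,ε;δ,ε,0] with hY
    have hXT : Xᵀ = X := by
      ext i j
      fin_cases i <;> fin_cases j <;>
        simp [hX, Matrix.vecHead, Matrix.vecTail, Matrix.transpose_apply]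
    have hYT : Yᵀ = Y := by
      ext i j
      fin_cases i <;> fin_cases j <;>
        simp [hY, Matrix.vecHead, Matrix.vecTail, Matrix.transpose_apply]
    have hZT : (Y + c • X)ᵀ = Y + c • X := by
      rw [transpose_add, transpose_smul, hXT, hYT]
    constructor
    · simp only [transpose_add, transpose_sub, transpose_mul, transpose_smul, hZT, hXT, hYT, hU]
      simp only [mul_neg, neg_mul, sub_neg_eq_add]
      abel
    · have h1 : Matrix.trace (U * (Y + c • X)) = Matrix.trace ((Y + c • X) * U) :=
        trace_mul_comm _ _
      have h2 : X.trace = 0 := by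
        rw [hX, Matrix.trace_fin_three]; simp; norm_num
      have h3 : Y.trace = 0 := by
        rw [hY, Matrix.trace_fin_three]; simp
      simp [trace_add, trace_sub, trace_smul, h1, h2, h3]
  · rintro ⟨hsym, htr⟩
    have h10 : P 1 0 = P 0 1 := by have := congrFun (congrFun hsym 0) 1; simpa using this
    have h20 : P 2 0 = P 0 2 := by have := congrFun (congrFun hsym 0) 2; simpa using this
    have h21 : P 2 1 = P 1 2 := by have := congrFun (congrFun hsym 1) 2; simpa using this
    have h22 : P 2 2 = -P 0 0 - P 1 1 := by
      have h := htr
      rw [Matrix.trace_fin_three] at h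
      linarith
    obtain ⟨D, hDdef⟩ : ∃ D' : ℝ, D' = 2*ε^4 + 4*δ^2*ε^2 + 2*δ^4 - 18*α*ε^2*c + 18*α*δ^2*c
        + 36*α^2*c^2 - 2*α^2*ε^2 - 2*α^2*δ^2 - 4*α^4 := ⟨_, rfl⟩
    have hD0 : D ≠ 0 := by rw [hDdef]; intro h; apply hD; linarith
    set p00 := P 0 0 with hp00
    set p11 := P 1 1 with hp11
    set p01 := P 0 1 with hp01
    set p02 := P 0 2 with hp02
    set p12 := P 1 2 with hp12
    obtain ⟨u, hu⟩ : ∃ x : ℝ, x = (6*ε^2*c*p01 + 2*ε^3*p02 - 6*δ*ε*c*p11 + 6*δ*ε*c*p00 - 2*δ*ε^2*p12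
      - 6*δ^2*c*p01 + 2*δ^2*ε*p02 - 2*δ^3*p12 - 18*α*c^2*p01 - 6*α*ε*c*p02
      + 2*α*ε^2*p01 - 6*α*δ*c*p12 + 2*α*δ^2*p01 + 2*α^2*ε*p02 - 2*α^2*δ*p12
      + 2*α^3*p01) / D := ⟨_, rfl⟩
    obtain ⟨v, hv⟩ : ∃ x : ℝ, x = (2*ε^3*p01 - δ*ε^2*p11 + δ*ε^2*p00 + 2*δ^2*ε*p01 - δ^3*p11 + δ^3*p00
      - 6*α*ε*c*p01 + 4*α*ε^2*p02 - 6*α*δ*c*p11 + 6*α*δ*c*p00 - 6*α*δ*ε*p12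
      - 2*α*δ^2*p02 - 12*α^2*c*p02 + 2*α^2*ε*p01 + 2*α^2*δ*p11 - 2*α^2*δ*p00
      + 4*α^3*p02) / D := ⟨_, rfl⟩
    obtain ⟨w, hw⟩ : ∃ x : ℝ, x = (ε^3*p11 - ε^3*p00 + 2*δ*ε^2*p01 + δ^2*ε*p11 - δ^2*ε*p00 + 2*δ^3*p01
      - 6*α*ε*c*p11 + 6*α*ε*c*p00 + 2*α*ε^2*p12 + 6*α*δ*c*p01 + 6*α*δ*ε*p02
      - 4*α*δ^2*p12 - 12*α^2*c*p12 - 2*α^2*ε*p11 + 2*α^2*ε*p00 + 2*α^2*δ*p01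
      - 4*α^3*p12) / D := ⟨_, rfl⟩
    obtain ⟨A, hA⟩ : ∃ x : ℝ, x = (2*ε^4*p00 - 4*δ*ε^3*p01 + 2*δ^2*ε^2*p11 + 2*δ^2*ε^2*p00 - 4*δ^3*ε*p01
      + 2*δ^4*p11 - 3*α*ε^2*c*p11 - 15*α*ε^2*c*p00 - 2*α*ε^3*p12 - 10*α*δ*ε^2*p02
      + 15*α*δ^2*c*p11 + 3*α*δ^2*c*p00 + 10*α*δ^2*ε*p12 + 2*α*δ^3*p02
      + 18*α^2*c^2*p11 + 18*α^2*c^2*p00 + 12*α^2*ε*c*p12 + α^2*ε^2*p11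
      - 3*α^2*ε^2*p00 + 12*α^2*δ*c*p02 - 4*α^2*δ*ε*p01 - 3*α^2*δ^2*p11
      + α^2*δ^2*p00 + 4*α^3*ε*p12 - 4*α^3*δ*p02 - 2*α^4*p11 - 2*α^4*p00) / D := ⟨_, rfl⟩
    obtain ⟨B, hB⟩ : ∃ x : ℝ, x = (3*ε^2*c*p11 - 3*ε^2*c*p00 + 2*ε^3*p12 + 12*δ*ε*c*p01 + 2*δ*ε^2*p02
      - 3*δ^2*c*p11 + 3*δ^2*c*p00 + 2*δ^2*ε*p12 + 2*δ^3*p02 - 18*α*c^2*p11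
      + 18*α*c^2*p00 - 12*α*ε*c*p12 - α*ε^2*p11 + α*ε^2*p00 + 12*α*δ*c*p02
      - α*δ^2*p11 + α*δ^2*p00 - 4*α^2*ε*p12 - 4*α^2*δ*p02 + 2*α^3*p11
      - 2*α^3*p00) / D := ⟨_, rfl⟩
    have e1 : p00 = 2*δ*v + A + B*α := by
      rw [hv, hA, hB]; field_simp; rw [hDdef]; ring
    have e2 : p11 = 2*ε*w + A - B*α := by
      rw [hw, hA, hB]; field_simp; rw [hDdef]; ring
    have e3 : p01 = -2*α*u + ε*v + δ*w := by
      rw [hu, hv, hw]; field_simp; rw [hDdef]; ring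
    have e4 : p02 = ε*u - (α+3*c)*v + B*δ := by
      rw [hu, hv, hB]; field_simp; rw [hDdef]; ring
    have e5 : p12 = -δ*u + (α-3*c)*w + B*ε := by
      rw [hu, hw, hB]; field_simp; rw [hDdef]; ring
    refine ⟨!![0, u, v; -u, 0, w; -v, -w, 0], A, B, ?_, ?_⟩
    · ext i j
      fin_cases i <;> fin_cases j <;>
        simp [Matrix.vecHead, Matrix.vecTail, Matrix.neg_apply, Matrix.transpose_apply]
    · ext i j
      fin_cases i <;> fin_cases j <;>
        simp [Matrix.mul_apply, Fin.sum_univ_three, Matrix.vecHead, Matrix.vecTail,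
          h10, h20, h21, h22, ← hp00, ← hp11, ← hp01, ← hp02, ← hp12] <;>
        first
          | linear_combination e1
          | linear_combination e2
          | linear_combination e3
          | linear_combination e4
          | linear_combination e5
          | linear_combination -e1 - e2

theorem stmt16 (α δ ε : ℝ) (hne : (α, δ, ε) ≠ (0, 0, 0)) :
    ∃ c : ℝ,
      {P : Matrix (Fin 3) (Fin 3) ℝ |
        ∃ (U : Matrix (Fin 3) (Fin 3) ℝ) (a b : ℝ), Uᵀ = -U ∧
          P = (U * (!![α, 0, δ; 0, -α, ε; δ, ε, 0]
                  + c • !![(1 : ℝ), 0, 0; 0, 1, 0; 0, 0, -2])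
              - (!![α, 0, δ; 0, -α, ε; δ, ε, 0]
                  + c • !![(1 : ℝ), 0, 0; 0, 1, 0; 0, 0, -2]) * U)
            + a • !![(1 : ℝ), 0, 0; 0, 1, 0; 0, 0, -2]
            + b • !![α, 0, δ; 0, -α, ε; δ, ε, 0]}
      = {P : Matrix (Fin 3) (Fin 3) ℝ | Pᵀ = P ∧ P.trace = 0} := by
  have hex : ∃ c : ℝ, 2*ε^4 + 4*δ^2*ε^2 + 2*δ^4 - 18*α*ε^2*c + 18*α*δ^2*c + 36*α^2*c^2
      - 2*α^2*ε^2 - 2*α^2*δ^2 - 4*α^4 ≠ 0 := by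
    by_contra h
    push_neg at h
    have h0 := h 0
    have h1 := h 1
    have hm := h (-1)
    have hα2 : α^2 = 0 := by nlinarith [h0, h1, hm]
    have hα : α = 0 := by
      have := sq_nonneg α; nlinarith [hα2]
    subst hα
    have hδ4 : δ^4 = 0 := by nlinarith [h0, sq_nonneg (δ^2), sq_nonneg (ε^2), sq_nonneg (δ*ε)]
    have hε4 : ε^4 = 0 := by nlinarith [h0, sq_nonneg (δ^2), sq_nonneg (ε^2), sq_nonneg (δ*ε)]
    have hδ : δ = 0 := by
      exact pow_eq_zero_iff (n := 4) (by norm_num) |>.mp hδ4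
    have hε : ε = 0 := by
      exact pow_eq_zero_iff (n := 4) (by norm_num) |>.mp hε4
    exact hne (by rw [hδ, hε])
  obtain ⟨c, hc⟩ := hex
  exact ⟨c, key α δ ε c hc⟩
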